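/- Let G be a minimal counterexample (fewest vertices, then most edges) among planar graphs of maximum degree Δ with 9 ≤ Δ ≤ 10 and χ₂(G) > 2Δ + 7. Then G does not contain a vertex of degree 3 incident to one triangular face and two faces of degree 4. -/

import Mathlib

open SimpleGraph

/-- The square of a graph `G`: two distinct vertices are adjacent iff they are at
distance at most 2 in `G`. -/
def SimpleGraph.square {V : Type*} (G : SimpleGraph V) : SimpleGraph V where
  Adj u v := u ≠ v ∧ (G.Adj u v ∨ ∃ w, G.Adj u w ∧ G.Adj w v)
  symm := ⟨fun u v ⟨h1, h2⟩ => ⟨h1.symm, h2.elim (fun h => Or.inl h.symm)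
    (fun ⟨w, h3, h4⟩ => Or.inr ⟨w, h4.symm, h3.symm⟩)⟩⟩
  loopless := ⟨fun _ h => h.1 rfl⟩

/-- The 2-chromatic number of a graph: the chromatic number of its square. -/
noncomputable def chi2 {V : Type*} (G : SimpleGraph V) : ℕ∞ :=
  G.square.chromaticNumber

/-- The degree of a vertex, as a cardinality (instance-free). -/
noncomputable def degN {V : Type*} (G : SimpleGraph V) (v : V) : ℕ :=
  Nat.card {u // G.Adj v u}

/-- `G` has maximum degree `Δ`. -/
def maxDegIs {V : Type*} (G : SimpleGraph V) (Δ : ℕ) : Prop :=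
  (∀ v, degN G v ≤ Δ) ∧ ∃ v, degN G v = Δ

/-- A graph is planar if it has a drawing in the plane: an injective placement of the
vertices and, for each edge, a simple arc joining the endpoints, such that arcs avoid
all vertex points and the interiors of arcs of distinct edges are disjoint. -/
def IsPlanar {V : Type*} (G : SimpleGraph V) : Prop :=
  ∃ (pos : V → ℝ × ℝ) (arc : V → V → ℝ → ℝ × ℝ),
    Function.Injective pos ∧
    (∀ u v, G.Adj u v →
      Continuous (arc u v) ∧ arc u v 0 = pos u ∧ arc u v 1 = pos v ∧
      Set.InjOn (arc u v) (Set.Icc 0 1) ∧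
      ∀ w, pos w ∉ arc u v '' Set.Ioo 0 1) ∧
    ∀ u v x y, G.Adj u v → G.Adj x y → s(u, v) ≠ s(x, y) →
      Disjoint (arc u v '' Set.Ioo 0 1) (arc x y '' Set.Ioo 0 1)

/-- `G` is a minimal counterexample (fewest vertices, then most edges) among planar
graphs of maximum degree at most `Δ` to the bound `χ₂ ≤ 2Δ + 7`. -/
def MinimalCex (Δ : ℕ) {V : Type*} [Fintype V] (G : SimpleGraph V) : Prop :=
  IsPlanar G ∧ maxDegIs G Δ ∧ ((2 * Δ + 7 : ℕ) : ℕ∞) < chi2 G ∧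
  ∀ (n : ℕ) (H : SimpleGraph (Fin n)), IsPlanar H →
    (∀ v, degN H v ≤ Δ) →
    (n < Fintype.card V ∨
      (n = Fintype.card V ∧ Nat.card G.edgeSet < Nat.card H.edgeSet)) →
    chi2 H ≤ ((2 * Δ + 7 : ℕ) : ℕ∞)

section Comb

variable {V : Type*} [Fintype V] [DecidableEq V] (G : SimpleGraph V) [DecidableRel G.Adj]

/-- The involution exchanging the two darts of each edge. -/
def dartSymmPerm : Equiv.Perm G.Dart :=
  ⟨SimpleGraph.Dart.symm, SimpleGraph.Dart.symm,
    fun d => d.symm_symm, fun d => d.symm_symm⟩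

/-- A combinatorial plane embedding (rotation system) of `G`: a permutation of the darts
whose cycles are exactly the sets of darts sharing a tail vertex. -/
structure PlaneEmbedding where
  rot : Equiv.Perm G.Dart
  same_vertex : ∀ d d' : G.Dart, rot.SameCycle d d' ↔ d.toProd.1 = d'.toProd.1

variable {G}

/-- The face-tracing permutation of an embedding. -/
def PlaneEmbedding.facePerm (e : PlaneEmbedding G) : Equiv.Perm G.Dart :=
  e.rot * dartSymmPerm G

/-- Darts lying on the same face. -/
def PlaneEmbedding.faceSetoid (e : PlaneEmbedding G) : Setoid G.Dart :=
  ⟨e.facePerm.SameCycle,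
    ⟨fun _ => Equiv.Perm.SameCycle.refl _ _, fun h => h.symm, fun h h' => h.trans h'⟩⟩

/-- The faces of an embedding: orbits of the face-tracing permutation on darts. -/
def PlaneEmbedding.Faces (e : PlaneEmbedding G) : Type _ := Quotient e.faceSetoid

/-- The degree of a face: the number of darts on it (so cut-edges count twice). -/
noncomputable def PlaneEmbedding.faceDeg (e : PlaneEmbedding G) (f : e.Faces) : ℕ :=
  Nat.card {d : G.Dart // Quotient.mk e.faceSetoid d = f}

/-- A vertex is incident to a face if some dart of the face has it as tail. -/
def PlaneEmbedding.VertexOnFace (e : PlaneEmbedding G) (v : V) (f : e.Faces) : Prop :=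
  ∃ d : G.Dart, d.toProd.1 = v ∧ Quotient.mk e.faceSetoid d = f

/-- A vertex is triangulated if all its incident faces are triangles. -/
def PlaneEmbedding.Triangulated (e : PlaneEmbedding G) (v : V) : Prop :=
  ∀ f : e.Faces, e.VertexOnFace v f → e.faceDeg f = 3

noncomputable instance (e : PlaneEmbedding G) : Fintype e.Faces :=
  @Fintype.ofFinite _ (Quotient.finite _)

/-- The embedding is on the sphere: Euler's formula holds. -/
def PlaneEmbedding.IsSphere (e : PlaneEmbedding G) : Prop :=
  (Fintype.card V : ℤ) - G.edgeFinset.card + Nat.card e.Faces = 2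

end Comb

theorem Equiv.Perm.apply_inv_self {α : Type*} (f : Equiv.Perm α) (x : α) : f (f⁻¹ x) = x :=
  Equiv.apply_symm_apply f x

open Function in

lemma orbit_spec {α : Type*} [Fintype α] [DecidableEq α] (σ : Equiv.Perm α) (e : α) (n : ℕ)
    (hn : Nat.card {d // σ.SameCycle e d} = n) :
    (σ ^ n) e = e ∧ (∀ j k, j < k → k < n → (σ ^ j) e ≠ (σ ^ k) e) ∧
      (∀ d, σ.SameCycle e d → ∃ k, k < n ∧ (σ ^ k) e = d) := by
  have hper : e ∈ periodicPts σ := by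
    refine ⟨orderOf σ, orderOf_pos σ, ?_⟩
    show σ^[orderOf σ] e = e
    rw [← Equiv.Perm.coe_pow, pow_orderOf_eq_one]; rfl
  set m := minimalPeriod σ e with hm
  have hmpos : 0 < m := minimalPeriod_pos_of_mem_periodicPts hper
  have hiter : ∀ k : ℕ, (σ ^ k) e = σ^[k] e := fun k => by rw [Equiv.Perm.coe_pow]
  have hsur : ∀ d, σ.SameCycle e d → ∃ k, k < m ∧ (σ ^ k) e = d := by
    intro d hd
    obtain ⟨i, _, rfl⟩ := hd.exists_pow_eq'
    exact ⟨i % m, Nat.mod_lt _ hmpos, by rw [hiter, hiter, iterate_mod_minimalPeriod_eq]⟩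
  have hinj : ∀ j k, j < m → k < m → (σ ^ j) e = (σ ^ k) e → j = k := by
    intro j k hj hk h
    have h' : (⇑σ)^[j] e = (⇑σ)^[k] e := by rw [← hiter, ← hiter]; exact h
    exact iterate_injOn_Iio_minimalPeriod (f := σ) (x := e) hj hk h'
  -- orbit has card m
  have hbij : Function.Bijective (fun i : Fin m => (⟨(σ ^ (i : ℕ)) e, (i:ℕ), by
      simp [zpow_natCast]⟩ : {d // σ.SameCycle e d})) := by
    constructor
    · intro i j hij
      exact Fin.ext (hinj _ _ i.2 j.2 (congrArg Subtype.val hij))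
    · rintro ⟨d, hd⟩
      obtain ⟨k, hk, rfl⟩ := hsur d hd
      exact ⟨⟨k, hk⟩, rfl⟩
  have hcard : Nat.card {d // σ.SameCycle e d} = m := by
    rw [← Nat.card_eq_of_bijective _ hbij, Nat.card_eq_fintype_card, Fintype.card_fin]
  have hnm : n = m := by rw [← hn, hcard]
  subst hnm
  refine ⟨by rw [hiter]; exact iterate_minimalPeriod, ?_, hsur⟩
  intro j k hjk hk h
  exact absurd (hinj j k (hjk.trans hk) hk h) hjk.ne

open SimpleGraph Finset

lemma square_adj_iff' {W : Type*} (G : SimpleGraph W) (u w : W) :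
    G.square.Adj u w ↔ u ≠ w ∧ (G.Adj u w ∨ ∃ z, G.Adj u z ∧ G.Adj z w) :=
  Iff.rfl

section CB
variable {V : Type*} [Fintype V] [DecidableEq V] (G : SimpleGraph V) [DecidableRel G.Adj]



lemma degN_eq_degree (v : V) : degN G v = G.degree v := by
  rw [degN, Nat.card_eq_fintype_card, ← SimpleGraph.card_neighborSet_eq_degree]
  apply Fintype.card_congr
  exact Equiv.subtypeEquivRight fun u => Iff.rfl

lemma degN_eq_cardN (v : V) : degN G v = (G.neighborFinset v).card := by
  rw [degN, Nat.card_eq_fintype_card, neighborFinset_def, Set.toFinset_card]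
  apply Fintype.card_congr
  exact Equiv.subtypeEquivRight fun u => Iff.rfl

lemma card_bound (Δ : ℕ) (hdeg : ∀ w, degN G w ≤ Δ) (v a b c x y : V)
    (hab : a ≠ b) (hac : a ≠ c) (hbc : b ≠ c)
    (hva : G.Adj v a) (hvb : G.Adj v b) (hvc : G.Adj v c) (hd3 : degN G v = 3)
    (hAab : G.Adj a b) (hxv : x ≠ v) (hbx : G.Adj b x) (hxc : G.Adj x c)
    (hyv : y ≠ v) (hcy : G.Adj c y) (hya : G.Adj y a)
    (S : Finset V) (hS : ∀ u, u ∈ S ↔ (u ≠ v ∧ G.square.Adj v u)) :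
    S.card ≤ 3 * Δ - 4 := by
  have hNv : G.neighborFinset v = {a, b, c} := by
    refine (Finset.eq_of_subset_of_card_le ?_ ?_).symm
    · intro u hu
      simp only [Finset.mem_insert, Finset.mem_singleton] at hu
      rcases hu with rfl | rfl | rfl <;> rw [mem_neighborFinset] <;> assumption
    · have h3' : (G.neighborFinset v).card = 3 := by
        rw [← degN_eq_cardN]; exact hd3
      rw [h3']
      have : ({a, b, c} : Finset V).card = 3 := by
        rw [Finset.card_insert_of_notMem (by simp [hab, hac]),
          Finset.card_insert_of_notMem (by simp [hbc]), Finset.card_singleton]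
      omega
  have hNv' : ∀ u, G.Adj v u ↔ (u = a ∨ u = b ∨ u = c) := by
    intro u
    rw [← mem_neighborFinset, hNv]
    simp
  -- the cover
  set T : Finset V := ({a, b, c, x, y} : Finset V) ∪ (G.neighborFinset a \ {v, b, y})
      ∪ (G.neighborFinset b \ {v, a, x}) ∪ (G.neighborFinset c \ {v, x, y}) with hT
  have hsubT : ∀ u, (u = a ∨ u = b ∨ u = c ∨ u = x ∨ u = y) → u ∈ T := by
    intro u hu
    have h5 : u ∈ ({a,b,c,x,y} : Finset V) := by
      simp only [Finset.mem_insert, Finset.mem_singleton]; exact hu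
    rw [hT]
    exact Finset.mem_union_left _ (Finset.mem_union_left _ (Finset.mem_union_left _ h5))
  have hcover : S ⊆ T := by
    intro u hu
    rw [hS] at hu
    obtain ⟨hune, hsq⟩ := hu
    obtain ⟨-, hcase⟩ := (square_adj_iff' G v u).mp hsq
    rcases hcase with hadj | ⟨z, hvz, hzu⟩
    · rcases (hNv' u).mp hadj with rfl | rfl | rfl
      exacts [hsubT _ (Or.inl rfl), hsubT _ (Or.inr (Or.inl rfl)),
        hsubT _ (Or.inr (Or.inr (Or.inl rfl)))]
    · by_cases hmem : u = a ∨ u = b ∨ u = c ∨ u = x ∨ u = y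
      · exact hsubT _ hmem
      · push_neg at hmem
        obtain ⟨h1, h2, h3, h4, h5⟩ := hmem
        rcases (hNv' z).mp hvz with rfl | rfl | rfl
        · rw [hT]
          refine Finset.mem_union_left _ (Finset.mem_union_left _ (Finset.mem_union_right _ ?_))
          rw [Finset.mem_sdiff, mem_neighborFinset]
          refine ⟨hzu, ?_⟩
          simp only [Finset.mem_insert, Finset.mem_singleton]
          push_neg
          exact ⟨hune, h2, h5⟩
        · rw [hT]
          refine Finset.mem_union_left _ (Finset.mem_union_right _ ?_)
          rw [Finset.mem_sdiff, mem_neighborFinset]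
          refine ⟨hzu, ?_⟩
          simp only [Finset.mem_insert, Finset.mem_singleton]
          push_neg
          exact ⟨hune, h1, h4⟩
        · rw [hT]
          refine Finset.mem_union_right _ ?_
          rw [Finset.mem_sdiff, mem_neighborFinset]
          refine ⟨hzu, ?_⟩
          simp only [Finset.mem_insert, Finset.mem_singleton]
          push_neg
          exact ⟨hune, h4, h5⟩
  have hsub1 : ({v, b, y} : Finset V) ⊆ G.neighborFinset a := by
    intro u hu; simp only [Finset.mem_insert, Finset.mem_singleton] at hu
    rcases hu with rfl | rfl | rfl <;> rw [mem_neighborFinset]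
    exacts [hva.symm, hAab, hya.symm]
  have hsub2 : ({v, a, x} : Finset V) ⊆ G.neighborFinset b := by
    intro u hu; simp only [Finset.mem_insert, Finset.mem_singleton] at hu
    rcases hu with rfl | rfl | rfl <;> rw [mem_neighborFinset]
    exacts [hvb.symm, hAab.symm, hbx]
  have hsub3 : ({v, x, y} : Finset V) ⊆ G.neighborFinset c := by
    intro u hu; simp only [Finset.mem_insert, Finset.mem_singleton] at hu
    rcases hu with rfl | rfl | rfl <;> rw [mem_neighborFinset]
    exacts [hvc.symm, hxc.symm, hcy]
  have e1 := Finset.card_sdiff_add_card_eq_card hsub1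
  have e2 := Finset.card_sdiff_add_card_eq_card hsub2
  have e3 := Finset.card_sdiff_add_card_eq_card hsub3
  have dA : (G.neighborFinset a).card ≤ Δ := by rw [← degN_eq_cardN]; exact hdeg a
  have dB : (G.neighborFinset b).card ≤ Δ := by rw [← degN_eq_cardN]; exact hdeg b
  have dC : (G.neighborFinset c).card ≤ Δ := by rw [← degN_eq_cardN]; exact hdeg c
  have hTcard : T.card ≤ ({a,b,c,x,y} : Finset V).card
      + (G.neighborFinset a \ {v, b, y}).card + (G.neighborFinset b \ {v, a, x}).card
      + (G.neighborFinset c \ {v, x, y}).card := by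
    refine le_trans (Finset.card_union_le _ _) ?_
    have h2 := Finset.card_union_le (({a,b,c,x,y} : Finset V) ∪ (G.neighborFinset a \ {v, b, y}))
      (G.neighborFinset b \ {v, a, x})
    have h3 := Finset.card_union_le ({a,b,c,x,y} : Finset V) (G.neighborFinset a \ {v, b, y})
    omega
  -- the main combinatorial inequality
  have hva' : v ≠ a := hva.ne
  have hvb' : v ≠ b := hvb.ne
  have hvx : v ≠ x := hxv.symm
  have hvy : v ≠ y := hyv.symm
  have hmain : ({a,b,c,x,y} : Finset V).card + 4 ≤
      ({v, b, y} : Finset V).card + ({v, a, x} : Finset V).card + ({v, x, y} : Finset V).card := by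
    have c3 : ∀ p q r : V, p ≠ q → p ≠ r → q ≠ r → ({p, q, r} : Finset V).card = 3 := by
      intro p q r h1 h2 h3
      rw [Finset.card_insert_of_notMem (by simp [h1, h2]),
        Finset.card_insert_of_notMem (by simp [h3]), Finset.card_singleton]
    have cpair : ∀ p q : V, p ≠ q → ({p, q, q} : Finset V).card = 2 := by
      intro p q h
      rw [show ({p,q,q} : Finset V) = {p, q} by simp,
        Finset.card_insert_of_notMem (by simp [h]), Finset.card_singleton]
    have cE : ({a,b,c} : Finset V).card = 3 := c3 a b c hab hac hbc
    have card4 : ∀ p : V, ({a,b,c,p} : Finset V).card ≤ 4 := by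
      intro p
      have h1 := Finset.card_insert_le a ({b,c,p} : Finset V)
      have h2 := Finset.card_insert_le b ({c,p} : Finset V)
      have h3 := Finset.card_insert_le c ({p} : Finset V)
      have h4 : ({p} : Finset V).card = 1 := Finset.card_singleton p
      omega
    have card5 : ({a,b,c,x,y} : Finset V).card ≤ 5 := by
      have h1 := Finset.card_insert_le a ({b,c,x,y} : Finset V)
      have h2 := Finset.card_insert_le b ({c,x,y} : Finset V)
      have h3 := Finset.card_insert_le c ({x,y} : Finset V)
      have h4 := Finset.card_insert_le x ({y} : Finset V)
      have h5 : ({y} : Finset V).card = 1 := Finset.card_singleton y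
      omega
    have tsub : ∀ (s : Finset V), x ∈ s → y ∈ s → a ∈ s → b ∈ s → c ∈ s →
        ({a,b,c,x,y} : Finset V).card ≤ s.card := by
      intro s hx hy ha hb hc
      refine Finset.card_le_card ?_
      intro u hu
      simp only [Finset.mem_insert, Finset.mem_singleton] at hu
      rcases hu with rfl | rfl | rfl | rfl | rfl <;> assumption
    have memE : ∀ p : V, p = a ∨ p = b ∨ p = c → p ∈ ({a,b,c} : Finset V) := by
      intro p hp
      simp only [Finset.mem_insert, Finset.mem_singleton]
      exact hp
    have memE4 : ∀ p q : V, p = a ∨ p = b ∨ p = c ∨ p = q → p ∈ ({a,b,c,q} : Finset V) := by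
      intro p q hp
      simp only [Finset.mem_insert, Finset.mem_singleton]
      exact hp
    by_cases h1 : y = b <;> by_cases h2 : x = a <;> by_cases h3 : x = y
    · exact absurd (h2.symm.trans (h3.trans h1)) hab
    · -- y = b, x = a
      have t3 : ({a,b,c,x,y} : Finset V).card ≤ 3 := by
        have := tsub ({a,b,c} : Finset V) (memE x (Or.inl h2)) (memE y (Or.inr (Or.inl h1)))
          (memE a (Or.inl rfl)) (memE b (Or.inr (Or.inl rfl))) (memE c (Or.inr (Or.inr rfl)))
        omega
      have s1 : ({v, b, y} : Finset V).card = 2 := by rw [h1]; exact cpair v b hvb'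
      have s2 : ({v, a, x} : Finset V).card = 2 := by
        rw [show ({v,a,x} : Finset V) = {v,a,a} by rw [h2]]; exact cpair v a hva'
      have s3 : ({v, x, y} : Finset V).card = 3 := c3 v x y hvx hvy h3
      omega
    · -- y = b, x = y (so x = b)
      have t3 : ({a,b,c,x,y} : Finset V).card ≤ 3 := by
        have := tsub ({a,b,c} : Finset V) (memE x (Or.inr (Or.inl (h3.trans h1))))
          (memE y (Or.inr (Or.inl h1)))
          (memE a (Or.inl rfl)) (memE b (Or.inr (Or.inl rfl))) (memE c (Or.inr (Or.inr rfl)))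
        omega
      have s1 : ({v, b, y} : Finset V).card = 2 := by rw [h1]; exact cpair v b hvb'
      have s2 : ({v, a, x} : Finset V).card = 3 := c3 v a x hva' hvx (fun h => h2 h.symm)
      have s3 : ({v, x, y} : Finset V).card = 2 := by
        rw [show ({v,x,y} : Finset V) = {v,y,y} by rw [h3]]; exact cpair v y hvy
      omega
    · -- y = b only
      have t4 : ({a,b,c,x,y} : Finset V).card ≤ 4 := by
        have := tsub ({a,b,c,x} : Finset V) (memE4 x x (Or.inr (Or.inr (Or.inr rfl))))
          (memE4 y x (Or.inr (Or.inl h1)))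
          (memE4 a x (Or.inl rfl)) (memE4 b x (Or.inr (Or.inl rfl)))
          (memE4 c x (Or.inr (Or.inr (Or.inl rfl))))
        have := card4 x
        omega
      have s1 : ({v, b, y} : Finset V).card = 2 := by rw [h1]; exact cpair v b hvb'
      have s2 : ({v, a, x} : Finset V).card = 3 := c3 v a x hva' hvx (fun h => h2 h.symm)
      have s3 : ({v, x, y} : Finset V).card = 3 := c3 v x y hvx hvy h3
      omega
    · -- x = a, x = y  (so y = a)
      have t3 : ({a,b,c,x,y} : Finset V).card ≤ 3 := by
        have := tsub ({a,b,c} : Finset V) (memE x (Or.inl h2)) (memE y (Or.inl (h3.symm.trans h2)))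
          (memE a (Or.inl rfl)) (memE b (Or.inr (Or.inl rfl))) (memE c (Or.inr (Or.inr rfl)))
        omega
      have s1 : ({v, b, y} : Finset V).card = 3 := c3 v b y hvb' hvy (fun h => h1 h.symm)
      have s2 : ({v, a, x} : Finset V).card = 2 := by
        rw [show ({v,a,x} : Finset V) = {v,a,a} by rw [h2]]; exact cpair v a hva'
      have s3 : ({v, x, y} : Finset V).card = 2 := by
        rw [show ({v,x,y} : Finset V) = {v,y,y} by rw [h3]]; exact cpair v y hvy
      omega
    · -- x = a only
      have t4 : ({a,b,c,x,y} : Finset V).card ≤ 4 := by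
        have := tsub ({a,b,c,y} : Finset V) (memE4 x y (Or.inl h2))
          (memE4 y y (Or.inr (Or.inr (Or.inr rfl))))
          (memE4 a y (Or.inl rfl)) (memE4 b y (Or.inr (Or.inl rfl)))
          (memE4 c y (Or.inr (Or.inr (Or.inl rfl))))
        have := card4 y
        omega
      have s1 : ({v, b, y} : Finset V).card = 3 := c3 v b y hvb' hvy (fun h => h1 h.symm)
      have s2 : ({v, a, x} : Finset V).card = 2 := by
        rw [show ({v,a,x} : Finset V) = {v,a,a} by rw [h2]]; exact cpair v a hva'
      have s3 : ({v, x, y} : Finset V).card = 3 := c3 v x y hvx hvy h3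
      omega
    · -- x = y only
      have t4 : ({a,b,c,x,y} : Finset V).card ≤ 4 := by
        have := tsub ({a,b,c,x} : Finset V) (memE4 x x (Or.inr (Or.inr (Or.inr rfl))))
          (memE4 y x (Or.inr (Or.inr (Or.inr h3.symm))))
          (memE4 a x (Or.inl rfl)) (memE4 b x (Or.inr (Or.inl rfl)))
          (memE4 c x (Or.inr (Or.inr (Or.inl rfl))))
        have := card4 x
        omega
      have s1 : ({v, b, y} : Finset V).card = 3 := c3 v b y hvb' hvy (fun h => h1 h.symm)
      have s2 : ({v, a, x} : Finset V).card = 3 := c3 v a x hva' hvx (fun h => h2 h.symm)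
      have s3 : ({v, x, y} : Finset V).card = 2 := by
        rw [show ({v,x,y} : Finset V) = {v,y,y} by rw [h3]]; exact cpair v y hvy
      omega
    · -- all distinct
      have s1 : ({v, b, y} : Finset V).card = 3 := c3 v b y hvb' hvy (fun h => h1 h.symm)
      have s2 : ({v, a, x} : Finset V).card = 3 := c3 v a x hva' hvx (fun h => h2 h.symm)
      have s3 : ({v, x, y} : Finset V).card = 3 := c3 v x y hvx hvy h3
      omega
  have hfin : S.card ≤ T.card := Finset.card_le_card hcover
  omega
end CB

section FaceLemmas
open SimpleGraph
variable {V : Type*} [Fintype V] [DecidableEq V] {G : SimpleGraph V} [DecidableRel G.Adj]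

lemma PlaneEmbedding.tail_eq_of_rot_sameCycle (e : PlaneEmbedding G) {d d' : G.Dart}
    (h : e.rot.SameCycle d d') : d.toProd.1 = d'.toProd.1 :=
  (e.same_vertex d d').mp h

lemma PlaneEmbedding.tail_rot (e : PlaneEmbedding G) (d : G.Dart) :
    (e.rot d).toProd.1 = d.toProd.1 :=
  (e.tail_eq_of_rot_sameCycle ⟨1, by rw [zpow_one]⟩).symm

lemma PlaneEmbedding.tail_rot_inv (e : PlaneEmbedding G) (d : G.Dart) :
    (e.rot⁻¹ d).toProd.1 = d.toProd.1 :=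
  (e.tail_eq_of_rot_sameCycle ⟨-1, by rw [zpow_neg_one]⟩).symm

lemma PlaneEmbedding.facePerm_apply (e : PlaneEmbedding G) (d : G.Dart) :
    e.facePerm d = e.rot d.symm := rfl

lemma PlaneEmbedding.tail_facePerm (e : PlaneEmbedding G) (d : G.Dart) :
    (e.facePerm d).toProd.1 = d.toProd.2 := by
  rw [e.facePerm_apply, e.tail_rot]
  rfl

lemma PlaneEmbedding.facePerm_inv_apply (e : PlaneEmbedding G) (d : G.Dart) :
    e.facePerm⁻¹ d = (e.rot⁻¹ d).symm := by
  apply e.facePerm.injective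
  rw [Equiv.Perm.apply_inv_self, e.facePerm_apply, SimpleGraph.Dart.symm_symm,
    Equiv.Perm.apply_inv_self]

/-- The darts with tail `v` biject with the neighbors of `v`. -/
def dartsAtEquiv (G : SimpleGraph V) (v : V) :
    {d : G.Dart // d.toProd.1 = v} ≃ {u // G.Adj v u} where
  toFun d := ⟨d.1.toProd.2, by
    have h := d.1.adj
    rw [d.2] at h
    exact h⟩
  invFun u := ⟨⟨(v, u.1), u.2⟩, rfl⟩
  left_inv := by rintro ⟨⟨⟨t, h⟩, hadj⟩, rfl⟩; rfl
  right_inv := by rintro ⟨u, hu⟩; rfl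

lemma card_dartsAt (G : SimpleGraph V) [DecidableRel G.Adj] (v : V) :
    Nat.card {d : G.Dart // d.toProd.1 = v} = degN G v :=
  Nat.card_congr (dartsAtEquiv G v)

lemma PlaneEmbedding.card_rotOrbit (e : PlaneEmbedding G) (d₀ : G.Dart) :
    Nat.card {d // e.rot.SameCycle d₀ d} = degN G d₀.toProd.1 := by
  rw [← card_dartsAt G d₀.toProd.1]
  apply Nat.card_congr
  exact Equiv.subtypeEquivRight fun d =>
    ⟨fun h => ((e.same_vertex d₀ d).mp h).symm, fun h => (e.same_vertex d₀ d).mpr h.symm⟩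

lemma PlaneEmbedding.faceDeg_mk (e : PlaneEmbedding G) (d₀ : G.Dart) :
    e.faceDeg (Quotient.mk e.faceSetoid d₀) = Nat.card {d // e.facePerm.SameCycle d₀ d} := by
  unfold PlaneEmbedding.faceDeg
  apply Nat.card_congr
  refine Equiv.subtypeEquivRight fun d => ?_
  rw [Quotient.eq]
  exact ⟨fun h => h.symm, fun h => h.symm⟩

end FaceLemmas
section FaceWalk
open SimpleGraph
variable {V : Type*} [Fintype V] [DecidableEq V] {G : SimpleGraph V} [DecidableRel G.Adj]

lemma PlaneEmbedding.pow_two_apply (σ : Equiv.Perm G.Dart) (d : G.Dart) :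
    (σ ^ 2) d = σ (σ d) := by
  rw [pow_two, Equiv.Perm.mul_apply]

lemma PlaneEmbedding.face_walk3 (e : PlaneEmbedding G) (d₀ : G.Dart)
    (h : Nat.card {d // e.facePerm.SameCycle d₀ d} = 3) :
    G.Adj d₀.toProd.2 (e.rot⁻¹ d₀).toProd.2 := by
  obtain ⟨hcyc, hdist, -⟩ := orbit_spec e.facePerm d₀ 3 h
  set σ := e.facePerm with hσ
  have h2 : (σ ^ 2) d₀ = σ⁻¹ d₀ := by
    apply σ.injective
    rw [Equiv.Perm.apply_inv_self, ← Equiv.Perm.mul_apply, ← pow_succ']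
    exact hcyc
  have t1 : (σ d₀).toProd.1 = d₀.toProd.2 := e.tail_facePerm d₀
  have t2 : ((σ ^ 2) d₀).toProd.1 = (σ d₀).toProd.2 := by
    rw [PlaneEmbedding.pow_two_apply]
    exact e.tail_facePerm (σ d₀)
  have t3 : (σ d₀).toProd.2 = (e.rot⁻¹ d₀).toProd.2 := by
    rw [← t2, h2, hσ, e.facePerm_inv_apply]
    rfl
  have hadj := (σ d₀).adj
  rw [t1, t3] at hadj
  exact hadj

lemma PlaneEmbedding.face_walk4 (e : PlaneEmbedding G) (d₀ : G.Dart)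
    (h : Nat.card {d // e.facePerm.SameCycle d₀ d} = 4) :
    G.Adj d₀.toProd.2 ((e.facePerm ^ 2) d₀).toProd.1 ∧
    G.Adj ((e.facePerm ^ 2) d₀).toProd.1 (e.rot⁻¹ d₀).toProd.2 ∧
    (e.facePerm ^ 2) d₀ ≠ d₀ ∧ e.facePerm.SameCycle d₀ ((e.facePerm ^ 2) d₀) := by
  obtain ⟨hcyc, hdist, -⟩ := orbit_spec e.facePerm d₀ 4 h
  set σ := e.facePerm with hσ
  have h3 : (σ ^ 3) d₀ = σ⁻¹ d₀ := by
    apply σ.injective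
    rw [Equiv.Perm.apply_inv_self, ← Equiv.Perm.mul_apply, ← pow_succ']
    exact hcyc
  have t1 : (σ d₀).toProd.1 = d₀.toProd.2 := e.tail_facePerm d₀
  have t2 : ((σ ^ 2) d₀).toProd.1 = (σ d₀).toProd.2 := by
    rw [PlaneEmbedding.pow_two_apply]
    exact e.tail_facePerm (σ d₀)
  have t3 : ((σ ^ 3) d₀).toProd.1 = ((σ ^ 2) d₀).toProd.2 := by
    rw [show (σ ^ 3) d₀ = σ ((σ ^ 2) d₀) by rw [pow_succ' σ 2, Equiv.Perm.mul_apply]]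
    exact e.tail_facePerm ((σ ^ 2) d₀)
  have t4 : ((σ ^ 2) d₀).toProd.2 = (e.rot⁻¹ d₀).toProd.2 := by
    rw [← t3, h3, hσ, e.facePerm_inv_apply]
    rfl
  refine ⟨?_, ?_, ?_, ?_⟩
  · have hadj := (σ d₀).adj
    rw [t1, ← t2] at hadj
    exact hadj
  · have hadj := ((σ ^ 2) d₀).adj
    rw [t4] at hadj
    exact hadj
  · intro hbad
    apply hdist 0 2 (by omega) (by omega)
    rw [pow_zero]
    exact (hbad.trans (Equiv.Perm.one_apply d₀).symm).symm
  · exact ⟨(2 : ℤ), by rw [show ((2:ℤ)) = ((2:ℕ):ℤ) by norm_num, zpow_natCast]⟩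

end FaceWalk
section KeyLemma
open SimpleGraph
variable {V : Type*} [Fintype V] [DecidableEq V]

lemma neighbors_eq_abc (G : SimpleGraph V) [DecidableRel G.Adj] (v a b c : V)
    (hab : a ≠ b) (hac : a ≠ c) (hbc : b ≠ c)
    (hva : G.Adj v a) (hvb : G.Adj v b) (hvc : G.Adj v c) (hd3 : degN G v = 3) :
    ∀ u, G.Adj v u → (u = a ∨ u = b ∨ u = c) := by
  have hNv : G.neighborFinset v = {a, b, c} := by
    refine (Finset.eq_of_subset_of_card_le ?_ ?_).symm
    · intro u hu
      simp only [Finset.mem_insert, Finset.mem_singleton] at hu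
      rcases hu with rfl | rfl | rfl <;> rw [SimpleGraph.mem_neighborFinset] <;> assumption
    · have h3' : (G.neighborFinset v).card = 3 := by
        rw [← degN_eq_cardN]; exact hd3
      rw [h3']
      have : ({a, b, c} : Finset V).card = 3 := by
        rw [Finset.card_insert_of_notMem (by simp [hab, hac]),
          Finset.card_insert_of_notMem (by simp [hbc]), Finset.card_singleton]
      omega
  intro u hu
  have : u ∈ G.neighborFinset v := (SimpleGraph.mem_neighborFinset _ _ _).mpr hu
  rw [hNv] at this
  simpa using this

lemma key_contra (G : SimpleGraph V) [DecidableRel G.Adj]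
    (Δ : ℕ) (hΔ : Δ = 9 ∨ Δ = 10) (hmin : MinimalCex Δ G)
    (v a b c x y : V) (hab : a ≠ b) (hac : a ≠ c) (hbc : b ≠ c)
    (hva : G.Adj v a) (hvb : G.Adj v b) (hvc : G.Adj v c) (hd3 : degN G v = 3)
    (hAab : G.Adj a b) (hxv : x ≠ v) (hbx : G.Adj b x) (hxc : G.Adj x c)
    (hyv : y ≠ v) (hcy : G.Adj c y) (hya : G.Adj y a) : False := by
  classical
  obtain ⟨hplanar, hmax, hgt, hminimal⟩ := hmin
  have hcardpos : 0 < Fintype.card V := Fintype.card_pos_iff.mpr ⟨v⟩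
  set n := Fintype.card V - 1 with hn
  have hcards : Fintype.card {u // u ≠ v} = n := by
    have h1 : Fintype.card {u // u = v} = 1 := Fintype.card_subtype_eq v
    have h2 := Fintype.card_subtype_compl (fun u : V => u = v)
    rw [h1] at h2
    exact h2
  set ε := Fintype.equivFinOfCardEq hcards with hε
  set ι : Fin n → V := fun i => ((ε.symm i : {u // u ≠ v}) : V) with hι
  have hιinj : Function.Injective ι := Subtype.coe_injective.comp ε.symm.injective
  have hιε : ∀ (p : V) (hp : p ≠ v), ι (ε ⟨p, hp⟩) = p := by
    intro p hp
    rw [hι]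
    simp only [Equiv.symm_apply_apply]
  set H : SimpleGraph (Fin n) := SimpleGraph.comap ι G with hH
  have hHAdj : ∀ i j, H.Adj i j ↔ G.Adj (ι i) (ι j) := fun _ _ => Iff.rfl
  have mkAdj : ∀ (p q : V) (hp : p ≠ v) (hq : q ≠ v), G.Adj p q →
      H.Adj (ε ⟨p, hp⟩) (ε ⟨q, hq⟩) := by
    intro p q hp hq hpq
    rw [hHAdj, hιε, hιε]
    exact hpq
  -- H is planar
  have hHplanar : IsPlanar H := by
    obtain ⟨pos, arc, hposinj, harc, hdisj⟩ := hplanar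
    refine ⟨pos ∘ ι, fun i j => arc (ι i) (ι j), hposinj.comp hιinj, ?_, ?_⟩
    · intro i j hadj
      obtain ⟨h1, h2, h3, h4, h5⟩ := harc (ι i) (ι j) hadj
      exact ⟨h1, h2, h3, h4, fun w => h5 (ι w)⟩
    · intro i j p q h1 h2 hne
      refine hdisj (ι i) (ι j) (ι p) (ι q) h1 h2 ?_
      intro heq
      apply hne
      apply Sym2.map.injective hιinj
      rwa [Sym2.map_pair_eq, Sym2.map_pair_eq]
  -- degrees of H are bounded
  have hHdeg : ∀ i, degN H i ≤ Δ := by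
    intro i
    have h1 : degN H i ≤ degN G (ι i) := by
      apply Nat.card_le_card_of_injective
        (fun u : {u // H.Adj i u} => (⟨ι u.1, u.2⟩ : {w // G.Adj (ι i) w}))
      intro u₁ u₂ h
      exact Subtype.ext (hιinj (Subtype.mk_eq_mk.mp h))
    exact le_trans h1 (hmax.1 (ι i))
  -- minimality gives a coloring of H²
  have hchi : chi2 H ≤ ((2 * Δ + 7 : ℕ) : ℕ∞) :=
    hminimal n H hHplanar hHdeg (Or.inl (by omega))
  have hcol : H.square.Colorable (2 * Δ + 7) :=
    SimpleGraph.chromaticNumber_le_iff_colorable.mp hchi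
  obtain ⟨C⟩ := hcol
  -- the forbidden set
  set S : Finset V := Finset.univ.filter (fun u => u ≠ v ∧ G.square.Adj v u) with hSdef
  have hSmem : ∀ u, u ∈ S ↔ (u ≠ v ∧ G.square.Adj v u) := by
    intro u
    rw [hSdef, Finset.mem_filter]
    exact ⟨fun h => h.2, fun h => ⟨Finset.mem_univ u, h⟩⟩
  have hScard : S.card ≤ 3 * Δ - 4 :=
    card_bound G Δ hmax.1 v a b c x y hab hac hbc hva hvb hvc hd3 hAab hxv hbx hxc
      hyv hcy hya S hSmem
  set g : V → Fin (2 * Δ + 7) :=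
    fun u => if h : u = v then (⟨0, by omega⟩ : Fin (2 * Δ + 7)) else C (ε ⟨u, h⟩) with hg
  set F : Finset (Fin (2 * Δ + 7)) := S.image g with hFdef
  have hFcard : F.card ≤ S.card := Finset.card_image_le
  have hfresh : ∃ k, k ∉ F := by
    by_contra hcon
    push_neg at hcon
    have hsub : (Finset.univ : Finset (Fin (2 * Δ + 7))) ⊆ F := fun k _ => hcon k
    have h2 := Finset.card_le_card hsub
    rw [Finset.card_univ, Fintype.card_fin] at h2
    rcases hΔ with rfl | rfl <;> omega
  obtain ⟨k, hk⟩ := hfresh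
  set cV : V → Fin (2 * Δ + 7) := fun u => if h : u = v then k else C (ε ⟨u, h⟩) with hcV
  have hcVne : ∀ (p : V) (hp : p ≠ v), cV p = C (ε ⟨p, hp⟩) := by
    intro p hp
    simp only [hcV]
    rw [dif_neg hp]
  have hcVv : cV v = k := by
    simp only [hcV]
    simp
  have hmemF : ∀ (p : V), p ≠ v → G.square.Adj v p → cV p ∈ F := by
    intro p hp hsq
    have hpS : p ∈ S := (hSmem p).mpr ⟨hp, hsq⟩
    have heq : cV p = g p := by
      simp only [hcV, hg]
      rw [dif_neg hp, dif_neg hp]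
    rw [heq, hFdef]
    exact Finset.mem_image_of_mem _ hpS
  have hvalid : ∀ ⦃u w : V⦄, G.square.Adj u w → cV u ≠ cV w := by
    intro u w hadj
    obtain ⟨hne, hcase⟩ := (square_adj_iff' G u w).mp hadj
    by_cases hu : u = v
    · by_cases hw : w = v
      · exact absurd (hu.trans hw.symm) hne
      · have hsqvw : G.square.Adj v w := by rw [← hu]; exact hadj
        have h2 : cV w ∈ F := hmemF w hw hsqvw
        rw [show cV u = k by rw [hu]; exact hcVv]
        intro hbad
        rw [hbad] at hk
        exact hk h2
    · by_cases hw : w = v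
      · have hsqvu : G.square.Adj v u := by rw [← hw]; exact hadj.symm
        have h2 : cV u ∈ F := hmemF u hu hsqvu
        rw [show cV w = k by rw [hw]; exact hcVv]
        intro hbad
        rw [← hbad] at hk
        exact hk h2
      · have hne' : (⟨u, hu⟩ : {t // t ≠ v}) ≠ ⟨w, hw⟩ :=
          fun h => hne (congrArg Subtype.val h)
        have hsq : H.square.Adj (ε ⟨u, hu⟩) (ε ⟨w, hw⟩) := by
          refine (square_adj_iff' H _ _).mpr ⟨fun h => hne' (ε.injective h), ?_⟩
          rcases hcase with hadj' | ⟨z, huz, hzw⟩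
          · exact Or.inl (mkAdj u w hu hw hadj')
          · by_cases hz : z = v
            · have huv : G.Adj v u := by rw [← hz]; exact huz.symm
              have hvw : G.Adj v w := by rw [← hz]; exact hzw
              have hu' := neighbors_eq_abc G v a b c hab hac hbc hva hvb hvc hd3 u huv
              have hw' := neighbors_eq_abc G v a b c hab hac hbc hva hvb hvc hd3 w hvw
              have pairAdj : ∀ (p q : V) (hp : p ≠ v) (hq : q ≠ v),
                  (p = a ∨ p = b ∨ p = c) → (q = a ∨ q = b ∨ q = c) → p ≠ q →
                  (H.Adj (ε ⟨p, hp⟩) (ε ⟨q, hq⟩) ∨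
                    ∃ z', H.Adj (ε ⟨p, hp⟩) z' ∧ H.Adj z' (ε ⟨q, hq⟩)) := by
                intro p q hp hq hpabc hqabc hpq
                rcases hpabc with h1 | h1 | h1 <;> rcases hqabc with h2 | h2 | h2
                · exact absurd (h1.trans h2.symm) hpq
                · exact Or.inl (mkAdj p q hp hq (by rw [h1, h2]; exact hAab))
                · exact Or.inr ⟨ε ⟨y, hyv⟩, mkAdj p y hp hyv (by rw [h1]; exact hya.symm),
                    mkAdj y q hyv hq (by rw [h2]; exact hcy.symm)⟩
                · exact Or.inl (mkAdj p q hp hq (by rw [h1, h2]; exact hAab.symm))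
                · exact absurd (h1.trans h2.symm) hpq
                · exact Or.inr ⟨ε ⟨x, hxv⟩, mkAdj p x hp hxv (by rw [h1]; exact hbx),
                    mkAdj x q hxv hq (by rw [h2]; exact hxc)⟩
                · exact Or.inr ⟨ε ⟨y, hyv⟩, mkAdj p y hp hyv (by rw [h1]; exact hcy),
                    mkAdj y q hyv hq (by rw [h2]; exact hya)⟩
                · exact Or.inr ⟨ε ⟨x, hxv⟩, mkAdj p x hp hxv (by rw [h1]; exact hxc.symm),
                    mkAdj x q hxv hq (by rw [h2]; exact hbx.symm)⟩
                · exact absurd (h1.trans h2.symm) hpq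
              exact pairAdj u w hu hw hu' hw' hne
            · exact Or.inr ⟨ε ⟨z, hz⟩, mkAdj u z hu hz huz, mkAdj z w hz hw hzw⟩
        have hCne := C.valid hsq
        rw [hcVne u hu, hcVne w hw]
        exact hCne
  have hcolG : G.square.Colorable (2 * Δ + 7) := ⟨SimpleGraph.Coloring.mk cV (fun {p q} h => hvalid h)⟩
  have hle := hcolG.chromaticNumber_le
  exact absurd hle (not_le.mpr hgt)
end KeyLemma

/-- For `Δ ∈ {9, 10}`, a minimal counterexample does not contain a vertex of degree 3
incident to one triangular face and two faces of degree 4. -/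
theorem stmt14 {V : Type*} [Fintype V] [DecidableEq V] (G : SimpleGraph V)
    [DecidableRel G.Adj] (Δ : ℕ) (hΔ : Δ = 9 ∨ Δ = 10) (hmin : MinimalCex Δ G)
    (e : PlaneEmbedding G) (hsphere : e.IsSphere) :
    ¬ ∃ (v : V) (f₁ f₂ f₃ : e.Faces), degN G v = 3 ∧
      f₁ ≠ f₂ ∧ f₁ ≠ f₃ ∧ f₂ ≠ f₃ ∧
      e.VertexOnFace v f₁ ∧ e.VertexOnFace v f₂ ∧ e.VertexOnFace v f₃ ∧
      e.faceDeg f₁ = 3 ∧ e.faceDeg f₂ = 4 ∧ e.faceDeg f₃ = 4 := by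
  rintro ⟨v, f₁, f₂, f₃, hdeg3, h12, h13, h23, hv1, hv2, hv3, hD1, hD2, hD3⟩
  classical
  obtain ⟨e₁, he₁t, he₁f⟩ := hv1
  obtain ⟨e₂, he₂t, he₂f⟩ := hv2
  obtain ⟨e₃, he₃t, he₃f⟩ := hv3
  have hd12 : e₁ ≠ e₂ := fun h => h12 (by rw [← he₁f, ← he₂f, h])
  have hd13 : e₁ ≠ e₃ := fun h => h13 (by rw [← he₁f, ← he₃f, h])
  have hd23 : e₂ ≠ e₃ := fun h => h23 (by rw [← he₂f, ← he₃f, h])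
  have hc3 : Nat.card {d : G.Dart // d.toProd.1 = v} = 3 := by
    rw [card_dartsAt]; exact hdeg3
  -- every dart with tail v is one of e₁, e₂, e₃
  have hall : ∀ d : G.Dart, d.toProd.1 = v → (d = e₁ ∨ d = e₂ ∨ d = e₃) := by
    have hfin : (Finset.univ.filter (fun d : G.Dart => d.toProd.1 = v)).card = 3 := by
      rw [← hc3, Nat.card_eq_fintype_card, Fintype.card_subtype]
    have hsub : ({e₁, e₂, e₃} : Finset G.Dart) ⊆
        Finset.univ.filter (fun d => d.toProd.1 = v) := by
      intro d hd
      simp only [Finset.mem_insert, Finset.mem_singleton] at hd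
      rcases hd with rfl | rfl | rfl <;> rw [Finset.mem_filter] <;>
        exact ⟨Finset.mem_univ _, by assumption⟩
    have hcard3 : ({e₁, e₂, e₃} : Finset G.Dart).card = 3 := by
      rw [Finset.card_insert_of_notMem (by simp [hd12, hd13]),
        Finset.card_insert_of_notMem (by simp [hd23]), Finset.card_singleton]
    have heq := Finset.eq_of_subset_of_card_le hsub (le_of_eq (hfin.trans hcard3.symm))
    intro d hd
    have hmem : d ∈ ({e₁, e₂, e₃} : Finset G.Dart) := by
      rw [heq, Finset.mem_filter]
      exact ⟨Finset.mem_univ _, hd⟩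
    simpa using hmem
  have hrotspec : ∀ d : G.Dart, d.toProd.1 = v →
      ((e.rot ^ 3) d = d ∧ (∀ j k, j < k → k < 3 → (e.rot ^ j) d ≠ (e.rot ^ k) d) ∧
        ∀ d', e.rot.SameCycle d d' → ∃ k, k < 3 ∧ (e.rot ^ k) d = d') := by
    intro d hd
    apply orbit_spec
    rw [e.card_rotOrbit, hd]
    exact hdeg3
  have hrinv_t : ∀ d : G.Dart, d.toProd.1 = v → (e.rot⁻¹ d).toProd.1 = v :=
    fun d hd => (e.tail_rot_inv d).trans hd
  have hrinv_ne : ∀ d : G.Dart, d.toProd.1 = v → e.rot⁻¹ d ≠ d := by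
    intro d hd hbad
    obtain ⟨-, hdist, -⟩ := hrotspec d hd
    apply hdist 0 1 (by omega) (by omega)
    rw [pow_zero, pow_one, Equiv.Perm.one_apply]
    conv_lhs => rw [← Equiv.Perm.apply_inv_self e.rot d, hbad]
  have hrot2 : ∀ d d' : G.Dart, d.toProd.1 = v → e.rot⁻¹ d = d' → e.rot⁻¹ d' = d → False := by
    intro d d' hd h1 h2
    obtain ⟨-, hdist, -⟩ := hrotspec d hd
    apply hdist 0 2 (by omega) (by omega)
    have hr1 : e.rot d = d' := by rw [← h2, Equiv.Perm.apply_inv_self]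
    have hr2 : e.rot d' = d := by rw [← h1, Equiv.Perm.apply_inv_self]
    rw [pow_zero, Equiv.Perm.one_apply, PlaneEmbedding.pow_two_apply, hr1, hr2]
  have hrinv_inj : ∀ d d' : G.Dart, e.rot⁻¹ d = e.rot⁻¹ d' → d = d' :=
    fun d d' h => e.rot⁻¹.injective h
  -- face degree data
  have hf1card : Nat.card {d // e.facePerm.SameCycle e₁ d} = 3 :=
    (e.faceDeg_mk e₁).symm.trans (by rw [he₁f]; exact hD1)
  have hf2card : Nat.card {d // e.facePerm.SameCycle e₂ d} = 4 :=
    (e.faceDeg_mk e₂).symm.trans (by rw [he₂f]; exact hD2)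
  have hf3card : Nat.card {d // e.facePerm.SameCycle e₃ d} = 4 :=
    (e.faceDeg_mk e₃).symm.trans (by rw [he₃f]; exact hD3)
  have htri := e.face_walk3 e₁ hf1card
  obtain ⟨hx1, hx2, hxne, hxsc⟩ := e.face_walk4 e₂ hf2card
  obtain ⟨hy1, hy2, hyne, hysc⟩ := e.face_walk4 e₃ hf3card
  have hqx : Quotient.mk e.faceSetoid e₂ = Quotient.mk e.faceSetoid ((e.facePerm ^ 2) e₂) :=
    Quotient.sound hxsc
  have hqy : Quotient.mk e.faceSetoid e₃ = Quotient.mk e.faceSetoid ((e.facePerm ^ 2) e₃) :=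
    Quotient.sound hysc
  -- the middle vertices of the 4-faces are not v
  have hxv : ((e.facePerm ^ 2) e₂).toProd.1 ≠ v := by
    intro hbad
    rcases hall _ hbad with h | h | h
    · exact h12 (by rw [← he₁f, ← he₂f, ← h]; exact hqx.symm)
    · exact hxne h
    · exact h23 (by rw [← he₂f, ← he₃f, ← h]; exact hqx)
  have hyv : ((e.facePerm ^ 2) e₃).toProd.1 ≠ v := by
    intro hbad
    rcases hall _ hbad with h | h | h
    · exact h13 (by rw [← he₁f, ← he₃f, ← h]; exact hqy.symm)
    · exact h23 (by rw [← he₂f, ← he₃f, ← h]; exact hqy.symm)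
    · exact hyne h
  -- heads are distinct, and adjacent to v
  have hhead_ne : ∀ d d' : G.Dart, d.toProd.1 = v → d'.toProd.1 = v → d ≠ d' →
      d.toProd.2 ≠ d'.toProd.2 := by
    intro d d' h h' hne hbad
    exact hne (SimpleGraph.Dart.ext _ _ (Prod.ext (h.trans h'.symm) hbad))
  have hadj_v : ∀ d : G.Dart, d.toProd.1 = v → G.Adj v d.toProd.2 := by
    intro d hd
    have h := d.adj
    rw [hd] at h
    exact h
  -- identify rot⁻¹ on the darts at v
  rcases hall _ (hrinv_t e₁ he₁t) with h1 | h1 | h1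
  · exact absurd h1 (hrinv_ne e₁ he₁t)
  · -- Case A : rot⁻¹ e₁ = e₂, rot⁻¹ e₂ = e₃, rot⁻¹ e₃ = e₁
    have h2 : e.rot⁻¹ e₂ = e₃ := by
      rcases hall _ (hrinv_t e₂ he₂t) with h | h | h
      · exact (hrot2 e₁ e₂ he₁t h1 h).elim
      · exact absurd h (hrinv_ne e₂ he₂t)
      · exact h
    have h3 : e.rot⁻¹ e₃ = e₁ := by
      rcases hall _ (hrinv_t e₃ he₃t) with h | h | h
      · exact h
      · exact absurd (hrinv_inj e₃ e₁ (h.trans h1.symm)) (Ne.symm hd13)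
      · exact absurd h (hrinv_ne e₃ he₃t)
    refine key_contra G Δ hΔ hmin v e₁.toProd.2 e₂.toProd.2 e₃.toProd.2
      ((e.facePerm ^ 2) e₂).toProd.1 ((e.facePerm ^ 2) e₃).toProd.1
      (hhead_ne e₁ e₂ he₁t he₂t hd12) (hhead_ne e₁ e₃ he₁t he₃t hd13)
      (hhead_ne e₂ e₃ he₂t he₃t hd23)
      (hadj_v e₁ he₁t) (hadj_v e₂ he₂t) (hadj_v e₃ he₃t) hdeg3
      ?_ hxv hx1 ?_ hyv hy1 ?_
    · rw [← h1]; exact htri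
    · rw [← h2]; exact hx2
    · rw [← h3]; exact hy2
  · -- Case B : rot⁻¹ e₁ = e₃, rot⁻¹ e₃ = e₂, rot⁻¹ e₂ = e₁
    have h3 : e.rot⁻¹ e₃ = e₂ := by
      rcases hall _ (hrinv_t e₃ he₃t) with h | h | h
      · exact (hrot2 e₁ e₃ he₁t h1 h).elim
      · exact h
      · exact absurd h (hrinv_ne e₃ he₃t)
    have h2 : e.rot⁻¹ e₂ = e₁ := by
      rcases hall _ (hrinv_t e₂ he₂t) with h | h | h
      · exact h
      · exact absurd h (hrinv_ne e₂ he₂t)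
      · exact absurd (hrinv_inj e₂ e₁ (h.trans h1.symm)) (Ne.symm hd12)
    refine key_contra G Δ hΔ hmin v e₁.toProd.2 e₃.toProd.2 e₂.toProd.2
      ((e.facePerm ^ 2) e₃).toProd.1 ((e.facePerm ^ 2) e₂).toProd.1
      (hhead_ne e₁ e₃ he₁t he₃t hd13) (hhead_ne e₁ e₂ he₁t he₂t hd12)
      (hhead_ne e₃ e₂ he₃t he₂t (Ne.symm hd23))
      (hadj_v e₁ he₁t) (hadj_v e₃ he₃t) (hadj_v e₂ he₂t) hdeg3
      ?_ hyv hy1 ?_ hxv hx1 ?_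
    · rw [← h1]; exact htri
    · rw [← h3]; exact hy2
    · rw [← h2]; exact hx2
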